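/- For every h ∈ H, the operator L_h (restriction of the generalized time derivative L u := (E u)' to {u ∈ W : (K u)(0) = h}) is maximal monotone as an operator from V := L²(T;V) to V* := L²(T;V*). -/

import Mathlib

open Filter Topology

/-- A (multi-valued) operator, identified with its graph `G ⊆ Z × Z*`,
is monotone. -/
def IsMonotoneGraph {Z : Type*} [NormedAddCommGroup Z] [NormedSpace ℝ Z]
    (G : Set (Z × (Z →L[ℝ] ℝ))) : Prop :=
  ∀ p ∈ G, ∀ q ∈ G, 0 ≤ (p.2 - q.2) (p.1 - q.1)

/-- A monotone graph is maximal monotone if it has no proper monotone extension. -/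
def IsMaximalMonotone {Z : Type*} [NormedAddCommGroup Z] [NormedSpace ℝ Z]
    (G : Set (Z × (Z →L[ℝ] ℝ))) : Prop :=
  IsMonotoneGraph G ∧ ∀ G', IsMonotoneGraph G' → G ⊆ G' → G' = G

/-- For every `h ∈ H`, the operator `L_h` (the restriction of the generalized
time derivative `L u := (E u)'` to `{u ∈ W : (K u)(0) = h}`) is maximal
monotone from `𝒱 = L²(T;V)` into `𝒱*`.  Here `W ⊆ 𝒱` is the domain of `L`,
`tr u := (K u)(0)` the initial trace, `J` the duality map of the strictly
convex reflexive space `𝒱`, and the extended operator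
`L̂(u, (K u)(0)) := (L u, J_H (K u)(0))` is maximal monotone; maximal
monotonicity of a monotone graph is characterized by surjectivity of `G + J`
(Zeidler, Thm. 32.F). -/
theorem Lh_maximal_monotone {𝒱 H : Type*}
    [NormedAddCommGroup 𝒱] [NormedSpace ℝ 𝒱] [CompleteSpace 𝒱]
    [NormedAddCommGroup H] [InnerProductSpace ℝ H] [CompleteSpace H]
    (W : Submodule ℝ 𝒱)
    (L : W →ₗ[ℝ] (𝒱 →L[ℝ] ℝ)) (tr : W →ₗ[ℝ] H)
    (J : 𝒱 → (𝒱 →L[ℝ] ℝ))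
    (hJ : ∀ v : 𝒱, J v v = ‖v‖ ^ 2 ∧ ‖J v‖ = ‖v‖)
    -- the graph of the extended operator `L̂` on `𝒱 × H`
    (Lhat : Set ((𝒱 × H) × ((𝒱 × H) →L[ℝ] ℝ)))
    (hLhat : Lhat = {p | ∃ u : W, p.1 = ((u : 𝒱), tr u) ∧
      p.2 = (L u).comp (ContinuousLinearMap.fst ℝ 𝒱 H) +
        ((innerSL ℝ (tr u)).comp (ContinuousLinearMap.snd ℝ 𝒱 H))})
    -- the duality map of the product `𝒱 × H` is `(v,g) ↦ (J v, J_H g)`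
    (Jprod : 𝒱 × H → ((𝒱 × H) →L[ℝ] ℝ))
    (hJprod : ∀ p : 𝒱 × H, Jprod p =
      (J p.1).comp (ContinuousLinearMap.fst ℝ 𝒱 H) +
        ((innerSL ℝ p.2).comp (ContinuousLinearMap.snd ℝ 𝒱 H)))
    -- `L̂` is (linear) maximal monotone
    (hmaxhat : IsMaximalMonotone Lhat)
    -- Zeidler's characterization on `𝒱 × H` ...
    (hcharP : ∀ G : Set ((𝒱 × H) × ((𝒱 × H) →L[ℝ] ℝ)), IsMonotoneGraph G →
      ((∀ F : (𝒱 × H) →L[ℝ] ℝ, ∃ p ∈ G, p.2 + Jprod p.1 = F) ↔ IsMaximalMonotone G))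
    -- ... and on `𝒱`
    (hcharV : ∀ G : Set (𝒱 × (𝒱 →L[ℝ] ℝ)), IsMonotoneGraph G →
      ((∀ f : 𝒱 →L[ℝ] ℝ, ∃ p ∈ G, p.2 + J p.1 = f) ↔ IsMaximalMonotone G)) :
    ∀ h : H, IsMaximalMonotone
      {p : 𝒱 × (𝒱 →L[ℝ] ℝ) | ∃ u : W, tr u = h ∧ p = ((u : 𝒱), L u)} := by
  intro h
  have hmonoLhat := hmaxhat.1
  set G : Set (𝒱 × (𝒱 →L[ℝ] ℝ)) :=
    {p : 𝒱 × (𝒱 →L[ℝ] ℝ) | ∃ u : W, tr u = h ∧ p = ((u : 𝒱), L u)} with hG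
  have hmem : ∀ u : W, (((u : 𝒱), tr u),
      (L u).comp (ContinuousLinearMap.fst ℝ 𝒱 H) +
        ((innerSL ℝ (tr u)).comp (ContinuousLinearMap.snd ℝ 𝒱 H))) ∈ Lhat := by
    intro u
    rw [hLhat]
    exact ⟨u, rfl, rfl⟩
  have hmono : IsMonotoneGraph G := by
    rintro p ⟨u, hu, rfl⟩ q ⟨v, hv, rfl⟩
    have h0 := hmonoLhat _ (hmem u) _ (hmem v)
    simpa [hu, hv, ContinuousLinearMap.sub_apply, ContinuousLinearMap.add_apply,
      ContinuousLinearMap.comp_apply] using h0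
  refine (hcharV G hmono).mp ?_
  intro f
  have hsurj := (hcharP Lhat hmonoLhat).mpr hmaxhat
  obtain ⟨p, hp, hF⟩ := hsurj (f.comp (ContinuousLinearMap.fst ℝ 𝒱 H) +
    ((innerSL ℝ ((2:ℝ) • h)).comp (ContinuousLinearMap.snd ℝ 𝒱 H)))
  rw [hLhat] at hp
  obtain ⟨u, hp1, hp2⟩ := hp
  rw [hp1, hp2, hJprod] at hF
  -- evaluate at (0, g) to get tr u = h
  have htr : tr u = h := by
    have h1 : ∀ g : H, (inner ℝ (tr u) g : ℝ) + inner ℝ (tr u) g = (2:ℝ) * inner ℝ h g := by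
      intro g
      have := congrArg (fun (T : (𝒱 × H) →L[ℝ] ℝ) => T ((0:𝒱), g)) hF
      simpa [ContinuousLinearMap.add_apply, ContinuousLinearMap.comp_apply,
        real_inner_smul_left] using this
    have h2 : (inner ℝ (tr u - h) (tr u - h) : ℝ) = (0:ℝ) := by
      have := h1 (tr u - h)
      have h3 : (inner ℝ (tr u) (tr u - h) : ℝ) = inner ℝ h (tr u - h) := by linarith
      rw [inner_sub_left, h3]
      ring
    have := inner_self_eq_zero.mp h2
    exact sub_eq_zero.mp this
  refine ⟨((u : 𝒱), L u), ⟨u, htr, rfl⟩, ?_⟩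
  ext v
  have := congrArg (fun (T : (𝒱 × H) →L[ℝ] ℝ) => T (v, (0:H))) hF
  simpa [ContinuousLinearMap.add_apply, ContinuousLinearMap.comp_apply] using this
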